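/- For all nonnegative integers k ≥ l and all real x and p: (1/π)·∫_{−∞}^{+∞} e^{2ips}·h_l(x−s)·h_k(x+s) ds = (e^{−x²−p²}/π)·(−1)^l·√(2^k·l!/(2^l·k!))·(x+ip)^{k−l}·L_l^{k−l}(2x²+2p²). -/

import Mathlib

open scoped BigOperators
open MeasureTheory

/-- Physicists' Hermite polynomials. -/
noncomputable def hermiteH : ℕ → ℝ → ℝ
  | 0 => fun _ => 1
  | 1 => fun x => 2 * x
  | (n + 2) => fun x => 2 * x * hermiteH (n + 1) x - 2 * (n + 1) * hermiteH n x

/-- Hermite functions `h_k(x) = (2^k·k!·√π)^{−1/2}·e^{−x²/2}·H_k(x)`. -/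
noncomputable def hermFun (k : ℕ) (x : ℝ) : ℝ :=
  (Real.sqrt (2 ^ k * (k.factorial : ℝ) * Real.sqrt Real.pi))⁻¹ *
    Real.exp (-x ^ 2 / 2) * hermiteH k x

/-- Generalized Laguerre polynomial `L_n^m(x) = Σ_{q=0}^n C(n+m, n−q)·(−x)^q/q!`. -/
noncomputable def lag (n m : ℕ) (x : ℂ) : ℂ :=
  ∑ q ∈ Finset.range (n + 1), ((n + m).choose (n - q) : ℂ) * (-x) ^ q / (q.factorial : ℂ)

open Polynomial

/-- complex Hermite polynomials (physicists') -/
noncomputable def Hc : ℕ → Polynomial ℂ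
  | 0 => 1
  | 1 => C 2 * X
  | (n + 2) => C 2 * X * Hc (n + 1) - C (2 * (n + 1) : ℂ) * Hc n

lemma Hc_def (m : ℕ) : Hc (m + 2) = C 2 * X * Hc (m + 1) - C (2 * (m + 1) : ℂ) * Hc m := rfl

lemma Hc_eval (n : ℕ) (t : ℝ) : (Hc n).eval (t : ℂ) = ((hermiteH n t : ℝ) : ℂ) := by
  induction n using Nat.twoStepInduction with
  | zero => simp [Hc, hermiteH]
  | one => simp [Hc, hermiteH]
  | more n ih1 ih2 =>
    simp only [Hc_def, hermiteH, eval_sub, eval_mul, eval_C, eval_X, ih1, ih2]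
    push_cast
    ring

lemma Hc_deriv : ∀ n : ℕ, (Hc (n + 1)).derivative = C (2 * (n + 1) : ℂ) * Hc n := by
  intro n
  induction n using Nat.twoStepInduction with
  | zero => show (Hc 1).derivative = _; simp [Hc]
  | one =>
    show (Hc 2).derivative = _
    rw [Hc_def 0]
    simp [derivative_mul, derivative_C, derivative_X, Hc]
    ring
  | more n ih1 ih2 =>
    show (Hc (n + 3)).derivative = _
    rw [Hc_def (n + 1)]
    simp only [derivative_sub, derivative_mul, derivative_C, derivative_X, ih1, ih2,
      zero_mul, zero_add, mul_one]
    rw [Hc_def n]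
    push_cast
    simp only [map_add, map_mul, map_ofNat, map_one, map_natCast]
    ring

lemma Hc_deriv' (n : ℕ) : (Hc n).derivative = C (2 * n : ℂ) * Hc (n - 1) := by
  cases n with
  | zero => simp [Hc]
  | succ n =>
    rw [Hc_deriv n]
    push_cast
    simp

lemma Hc_rec (n : ℕ) : Hc (n + 1) = C 2 * X * Hc n - C (2 * n : ℂ) * Hc (n - 1) := by
  cases n with
  | zero => simp [Hc]
  | succ n =>
    rw [Hc_def n]
    push_cast
    simp

/-- integrability of monomial × gaussian with imaginary linear shift -/
lemma int_mono_gauss (n : ℕ) (p : ℝ) :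
    Integrable fun s : ℝ => (s : ℂ) ^ n * Complex.exp (-(s:ℂ) ^ 2 + 2 * Complex.I * p * s) := by
  have hg : Integrable fun s : ℝ => |s| ^ n * Real.exp (-s ^ 2) := by
    have h := (integrable_rpow_mul_exp_neg_mul_sq (b := 1) one_pos
      (s := (n : ℝ)) ((by norm_num : (-1:ℝ) < 0).trans_le (Nat.cast_nonneg n))).abs
    refine h.congr ?_
    filter_upwards with s
    rw [abs_mul, Real.rpow_natCast, abs_pow, Real.abs_exp]; norm_num
  refine hg.mono' ?_ ?_
  · apply Continuous.aestronglyMeasurable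
    continuity
  · filter_upwards with s
    rw [norm_mul, norm_pow, Complex.norm_exp, Complex.norm_real, Real.norm_eq_abs]
    have : (-(s:ℂ) ^ 2 + 2 * Complex.I * p * s).re = -s ^ 2 := by
      simp [Complex.add_re, Complex.mul_re, Complex.I_re, Complex.I_im, ← Complex.ofReal_pow]
    rw [this]

lemma tendsto_mono_gauss (n : ℕ) (p : ℝ) :
    Filter.Tendsto (fun s : ℝ => (s : ℂ) ^ n * Complex.exp (-(s:ℂ) ^ 2 + 2 * Complex.I * p * s))
      (Filter.cocompact ℝ) (nhds 0) := by
  refine squeeze_zero_norm (fun s => ?_) (tendsto_rpow_abs_mul_exp_neg_mul_sq_cocompact one_pos (n:ℝ))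
  · rw [norm_mul, norm_pow, Complex.norm_exp, Complex.norm_real, Real.norm_eq_abs]
    have : (-(s:ℂ) ^ 2 + 2 * Complex.I * p * s).re = -s ^ 2 := by
      simp [Complex.add_re, Complex.mul_re, Complex.I_re, Complex.I_im, ← Complex.ofReal_pow]
    rw [this, Real.rpow_natCast]
    norm_num

/-- the integral functional -/
noncomputable def Iw (p : ℝ) (P : Polynomial ℂ) : ℂ :=
  ∫ s : ℝ, P.eval (s : ℂ) * Complex.exp (-(s:ℂ) ^ 2 + 2 * Complex.I * p * s)

lemma int_poly_gauss (P : Polynomial ℂ) (p : ℝ) :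
    Integrable fun s : ℝ => P.eval (s:ℂ) * Complex.exp (-(s:ℂ) ^ 2 + 2 * Complex.I * p * s) := by
  have : (fun s : ℝ => P.eval (s:ℂ) * Complex.exp (-(s:ℂ) ^ 2 + 2 * Complex.I * p * s)) =
      fun s : ℝ => ∑ i ∈ Finset.range (P.natDegree + 1),
        P.coeff i * ((s:ℂ) ^ i * Complex.exp (-(s:ℂ) ^ 2 + 2 * Complex.I * p * s)) := by
    funext s
    rw [Polynomial.eval_eq_sum_range, Finset.sum_mul]
    simp [mul_assoc]
  rw [this]
  exact integrable_finset_sum _ fun i _ => (int_mono_gauss i p).const_mul _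

lemma tendsto_poly_gauss (P : Polynomial ℂ) (p : ℝ) :
    Filter.Tendsto (fun s : ℝ => P.eval (s:ℂ) * Complex.exp (-(s:ℂ) ^ 2 + 2 * Complex.I * p * s))
      (Filter.cocompact ℝ) (nhds 0) := by
  have : (fun s : ℝ => P.eval (s:ℂ) * Complex.exp (-(s:ℂ) ^ 2 + 2 * Complex.I * p * s)) =
      fun s : ℝ => ∑ i ∈ Finset.range (P.natDegree + 1),
        P.coeff i * ((s:ℂ) ^ i * Complex.exp (-(s:ℂ) ^ 2 + 2 * Complex.I * p * s)) := by
    funext s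
    rw [Polynomial.eval_eq_sum_range, Finset.sum_mul]
    simp [mul_assoc]
  rw [this]
  have h0 : (0 : ℂ) = ∑ i ∈ Finset.range (P.natDegree + 1), P.coeff i * 0 := by simp
  rw [h0]
  exact tendsto_finset_sum _ fun i _ => (tendsto_mono_gauss i p).const_mul _

lemma Iw_add (p : ℝ) (P Q : Polynomial ℂ) : Iw p (P + Q) = Iw p P + Iw p Q := by
  unfold Iw
  rw [← integral_add (int_poly_gauss P p) (int_poly_gauss Q p)]
  congr 1
  funext s
  rw [eval_add]
  ring

lemma Iw_Cmul (p : ℝ) (a : ℂ) (P : Polynomial ℂ) : Iw p (C a * P) = a * Iw p P := by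
  unfold Iw
  rw [← integral_const_mul]
  congr 1
  funext s
  rw [eval_mul, eval_C]
  ring

lemma Iw_sub (p : ℝ) (P Q : Polynomial ℂ) : Iw p (P - Q) = Iw p P - Iw p Q := by
  have h := Iw_add p (P - Q) Q
  rw [sub_add_cancel] at h
  rw [h]; ring

lemma Iw_deriv (p : ℝ) (P : Polynomial ℂ) :
    Iw p (P.derivative + (C (2 * Complex.I * p) - C 2 * X) * P) = 0 := by
  set c : ℂ := 2 * Complex.I * p with hc
  set Q : Polynomial ℂ := P.derivative + (C c - C 2 * X) * P with hQ
  have hd : ∀ s : ℝ, HasDerivAt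
      (fun s : ℝ => P.eval (s:ℂ) * Complex.exp (-(s:ℂ) ^ 2 + c * s))
      (Q.eval (s:ℂ) * Complex.exp (-(s:ℂ) ^ 2 + c * s)) s := by
    intro s
    have h1 : HasDerivAt (fun w : ℂ => -w ^ 2 + c * w) (-(2 * (s:ℂ)) + c) (s:ℂ) := by
      have := ((hasDerivAt_pow 2 ((s:ℂ))).neg).add ((hasDerivAt_id ((s:ℂ))).const_mul c)
      exact this.congr_deriv (by norm_num)
    have hE := h1.cexp
    have hP := P.hasDerivAt ((s:ℂ))
    have := (hP.mul hE).comp_ofReal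
    convert this using 1
    · rfl
    rw [hQ]
    simp only [eval_add, eval_mul, eval_sub, eval_C, eval_X]
    ring
  have hint : Integrable fun s : ℝ => Q.eval (s:ℂ) * Complex.exp (-(s:ℂ) ^ 2 + c * s) :=
    int_poly_gauss Q p
  have hco := tendsto_poly_gauss P p
  rw [cocompact_eq_atBot_atTop] at hco
  have h0 : (∫ s : ℝ, Q.eval (s:ℂ) * Complex.exp (-(s:ℂ) ^ 2 + c * s)) = 0 - 0 :=
    integral_of_hasDerivAt_of_tendsto hd hint
      (hco.mono_left le_sup_left) (hco.mono_left le_sup_right)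
  simpa [Iw] using h0

lemma Iw_one (p : ℝ) : Iw p 1 = (Real.sqrt Real.pi : ℂ) * Complex.exp (-(p:ℂ) ^ 2) := by
  unfold Iw
  simp only [eval_one, one_mul]
  have h := integral_cexp_quadratic (b := -1) (by norm_num) (2 * Complex.I * p) 0
  simp only [add_zero, zero_sub] at h
  have heq : (fun s : ℝ => Complex.exp (-(s:ℂ) ^ 2 + 2 * Complex.I * p * s)) =
      fun s : ℝ => Complex.exp (-1 * (s:ℂ) ^ 2 + 2 * Complex.I * p * s) := by
    funext s; ring_nf
  rw [heq, h]
  have h1 : ((Real.pi : ℂ) / - -1) ^ (1/2 : ℂ) = (Real.sqrt Real.pi : ℂ) := by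
    norm_num
    rw [Real.sqrt_eq_rpow, Complex.ofReal_cpow Real.pi_pos.le]
    norm_num
  have h2 : (2 * Complex.I * (p:ℂ)) ^ 2 = -4 * (p:ℂ) ^ 2 := by
    rw [mul_pow, mul_pow, Complex.I_sq]; ring
  rw [h1, h2]
  congr 1
  ring

noncomputable def Apoly (x : ℝ) (k l : ℕ) : Polynomial ℂ :=
  ((Hc l).comp (C (x:ℂ) - X)) * ((Hc k).comp (C (x:ℂ) + X))

lemma Apoly_rec_l (x p : ℝ) (k l : ℕ) :
    Apoly x k (l + 1) =
      C (2 * ((x:ℂ) - Complex.I * p)) * Apoly x k l - C (2 * (k:ℂ)) * Apoly x (k - 1) l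
        - ((C 2 * X - C (2 * Complex.I * (p:ℂ))) * Apoly x k l - (Apoly x k l).derivative) := by
  unfold Apoly
  rw [Hc_rec l]
  simp only [derivative_mul, derivative_comp, Hc_deriv' l, Hc_deriv' k,
    derivative_sub, derivative_add, derivative_C, derivative_X, sub_comp, mul_comp, C_comp, X_comp, natCast_comp, ofNat_comp, one_comp,
    map_mul, map_sub, map_add, map_ofNat, map_natCast, map_one]
  ring

lemma Apoly_rec_k (x p : ℝ) (k l : ℕ) :
    Apoly x (k + 1) l =
      C (2 * ((x:ℂ) + Complex.I * p)) * Apoly x k l - C (2 * (l:ℂ)) * Apoly x k (l - 1)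
        + ((C 2 * X - C (2 * Complex.I * (p:ℂ))) * Apoly x k l - (Apoly x k l).derivative) := by
  unfold Apoly
  rw [Hc_rec k]
  simp only [derivative_mul, derivative_comp, Hc_deriv' l, Hc_deriv' k,
    derivative_sub, derivative_add, derivative_C, derivative_X, sub_comp, mul_comp, C_comp, X_comp, natCast_comp, ofNat_comp, one_comp,
    map_mul, map_sub, map_add, map_ofNat, map_natCast, map_one]
  ring

lemma Iw_neg (p : ℝ) (P : Polynomial ℂ) : Iw p (-P) = -Iw p P := by
  have h := Iw_add p (-P) P
  simp only [neg_add_cancel] at h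
  have h0 : Iw p 0 = 0 := by simp [Iw]
  rw [h0] at h
  linear_combination -h

lemma Iw_ibp (p : ℝ) (P : Polynomial ℂ) :
    Iw p ((C 2 * X - C (2 * Complex.I * p)) * P - P.derivative) = 0 := by
  have h := Iw_deriv p P
  have he : (C 2 * X - C (2 * Complex.I * (p:ℝ))) * P - P.derivative =
      -(P.derivative + (C (2 * Complex.I * (p:ℝ)) - C 2 * X) * P) := by ring
  rw [he, Iw_neg, h, neg_zero]

noncomputable def Wint (x p : ℝ) (k l : ℕ) : ℂ := Iw p (Apoly x k l)

lemma W_rec_l (x p : ℝ) (k l : ℕ) :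
    Wint x p k (l + 1) =
      2 * ((x:ℂ) - Complex.I * p) * Wint x p k l - 2 * k * Wint x p (k - 1) l := by
  unfold Wint
  rw [Apoly_rec_l x p k l, Iw_sub, Iw_sub, Iw_Cmul, Iw_Cmul,
    show (C 2 * X - C (2 * Complex.I * (p:ℝ))) * Apoly x k l - (Apoly x k l).derivative =
      (C 2 * X - C (2 * Complex.I * (p:ℝ))) * Apoly x k l - (Apoly x k l).derivative from rfl,
    Iw_ibp]
  ring

lemma W_rec_k (x p : ℝ) (k l : ℕ) :
    Wint x p (k + 1) l =
      2 * ((x:ℂ) + Complex.I * p) * Wint x p k l - 2 * l * Wint x p k (l - 1) := by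
  unfold Wint
  rw [Apoly_rec_k x p k l, Iw_add, Iw_sub, Iw_Cmul, Iw_Cmul, Iw_ibp]
  ring

lemma choose_id (n m q : ℕ) (hq : q ≤ n) :
    (n + 1) * (n + m + 1).choose (n + 1 - q) =
      (n + m + 1) * (n + m).choose (n - q) + q * (n + m + 1).choose (n + 1 - q) := by
  obtain ⟨j, rfl⟩ : ∃ j, n = q + j := ⟨n - q, by omega⟩
  have h1 : q + j + 1 - q = j + 1 := by omega
  have h2 : q + j - q = j := by omega
  rw [h1, h2]
  have h3 := Nat.add_one_mul_choose_eq (q + j + m) j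
  have : (q + j + 1) * (q + j + m + 1).choose (j + 1) =
      q * (q + j + m + 1).choose (j + 1) + (j + 1) * (q + j + m + 1).choose (j + 1) := by ring
  rw [this]
  have h4 : (j + 1) * (q + j + m + 1).choose (j + 1) = (q + j + m + 1) * (q + j + m).choose j := by
    rw [mul_comm (j+1) _, h3]
  omega

lemma lag_rec (n m : ℕ) (u : ℂ) :
    ((n : ℂ) + 1) * lag (n + 1) m u =
      ((n : ℂ) + (m : ℂ) + 1) * lag n m u - u * lag n (m + 1) u := by
  have hfac : ∀ q : ℕ, ((q.factorial : ℂ)) ≠ 0 := fun q =>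
    Nat.cast_ne_zero.2 q.factorial_ne_zero
  unfold lag
  -- rewrite the u * (third sum) as a sum over range (n+2)
  have hd : u * ∑ q ∈ Finset.range (n + 1),
        ((n + (m + 1)).choose (n - q) : ℂ) * (-u) ^ q / (q.factorial : ℂ) =
      -∑ q ∈ Finset.range (n + 1 + 1),
        (q : ℂ) * ((n + m + 1).choose (n + 1 - q) : ℂ) * (-u) ^ q / (q.factorial : ℂ) := by
    have hs := Finset.sum_range_succ'
      (fun q => (q : ℂ) * ((n + m + 1).choose (n + 1 - q) : ℂ) * (-u) ^ q / (q.factorial : ℂ))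
      (n + 1)
    rw [hs]
    simp only [Nat.cast_zero, zero_mul, zero_div, add_zero]
    rw [Finset.mul_sum, ← Finset.sum_neg_distrib]
    refine Finset.sum_congr rfl fun q hq => ?_
    have h1 : n + 1 - (q + 1) = n - q := by omega
    have h2 : n + (m + 1) = n + m + 1 := by omega
    have hq1 : ((q:ℂ) + 1) ≠ 0 := Nat.cast_add_one_ne_zero q
    have hD : (((q+1).factorial : ℕ) : ℂ) = ((q:ℂ) + 1) * (q.factorial : ℂ) := by
      rw [Nat.factorial_succ]; push_cast; ring
    rw [h1, h2, hD]
    push_cast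
    field_simp [hfac q, hq1]
    ring
  have hb : ∑ q ∈ Finset.range (n + 1), ((n + m).choose (n - q) : ℂ) * (-u) ^ q / (q.factorial : ℂ) =
      (∑ q ∈ Finset.range (n + 1 + 1), ((n + m).choose (n - q) : ℂ) * (-u) ^ q / (q.factorial : ℂ))
        - (-u) ^ (n + 1) / ((n + 1).factorial : ℂ) := by
    have hs := Finset.sum_range_succ
      (fun q => ((n + m).choose (n - q) : ℂ) * (-u) ^ q / (q.factorial : ℂ)) (n + 1)
    rw [hs]
    have h0 : n - (n + 1) = 0 := by omega
    rw [h0]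
    simp only [Nat.choose_zero_right, Nat.cast_one, one_mul]
    ring
  have KEY : ∑ q ∈ Finset.range (n + 1 + 1),
      (((n : ℂ) + 1) * (((n + 1 + m).choose (n + 1 - q) : ℂ) * (-u) ^ q / (q.factorial : ℂ))
        - ((n : ℂ) + (m : ℂ) + 1) * (((n + m).choose (n - q) : ℂ) * (-u) ^ q / (q.factorial : ℂ))
        - (q : ℂ) * ((n + m + 1).choose (n + 1 - q) : ℂ) * (-u) ^ q / (q.factorial : ℂ)) =
      -(((n : ℂ) + (m : ℂ) + 1) * ((-u) ^ (n + 1) / ((n + 1).factorial : ℂ))) := by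
    rw [Finset.sum_range_succ]
    have hz : ∑ q ∈ Finset.range (n + 1),
        (((n : ℂ) + 1) * (((n + 1 + m).choose (n + 1 - q) : ℂ) * (-u) ^ q / (q.factorial : ℂ))
          - ((n : ℂ) + (m : ℂ) + 1) * (((n + m).choose (n - q) : ℂ) * (-u) ^ q / (q.factorial : ℂ))
          - (q : ℂ) * ((n + m + 1).choose (n + 1 - q) : ℂ) * (-u) ^ q / (q.factorial : ℂ)) = 0 := by
      refine Finset.sum_eq_zero fun q hq => ?_
      have hq' : q ≤ n := Nat.lt_succ_iff.mp (Finset.mem_range.mp hq)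
      have hcid := choose_id n m q hq'
      have hc : ((n : ℂ) + 1) * ((n + m + 1).choose (n + 1 - q) : ℂ) =
          ((n : ℂ) + (m : ℂ) + 1) * ((n + m).choose (n - q) : ℂ)
            + (q : ℂ) * ((n + m + 1).choose (n + 1 - q) : ℂ) := by
        exact_mod_cast congrArg (Nat.cast : ℕ → ℂ) hcid
      have hch : (n + 1 + m).choose (n + 1 - q) = (n + m + 1).choose (n + 1 - q) := by
        congr 1
        omega
      rw [hch]
      linear_combination ((-u) ^ q / (q.factorial : ℂ)) * hc
    rw [hz, zero_add]
    have h1 : n + 1 - (n + 1) = 0 := by omega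
    have h2 : n - (n + 1) = 0 := by omega
    rw [h1, h2]
    simp only [Nat.choose_zero_right, Nat.cast_one]
    push_cast
    ring
  rw [Finset.sum_sub_distrib, Finset.sum_sub_distrib, ← Finset.mul_sum, ← Finset.mul_sum] at KEY
  rw [hd, hb]
  linear_combination KEY

lemma lag_zero (m : ℕ) (u : ℂ) : lag 0 m u = 1 := by
  simp [lag]

lemma Apoly_zero (x : ℝ) : Apoly x 0 0 = 1 := by
  simp [Apoly, Hc]

lemma W_closed (x p : ℝ) : ∀ l m : ℕ, Wint x p (l + m) l =
    (Real.sqrt Real.pi : ℂ) * Complex.exp (-(p:ℂ) ^ 2) * (-1) ^ l * 2 ^ (l + m) *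
      (l.factorial : ℂ) * ((x:ℂ) + Complex.I * p) ^ m *
      lag l m (2 * (x:ℂ) ^ 2 + 2 * (p:ℂ) ^ 2) := by
  intro l
  induction l with
  | zero =>
    intro m
    induction m with
    | zero =>
      show Wint x p 0 0 = _
      unfold Wint
      rw [Apoly_zero, Iw_one, lag_zero]
      norm_num
    | succ m ih =>
      have h := W_rec_k x p (0 + m) 0
      rw [show (0 + m + 1) = 0 + (m + 1) from by omega] at h
      rw [h, ih, lag_zero, lag_zero]
      push_cast
      ring
  | succ l ih =>
    intro m
    have h := W_rec_l x p (l + 1 + m) l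
    rw [show l + 1 + m - 1 = l + m from by omega] at h
    have ih1 := ih (m + 1)
    rw [show l + (m + 1) = l + 1 + m from by omega] at ih1
    have ih0 := ih m
    rw [h, ih1, ih0, Nat.factorial_succ]
    push_cast
    linear_combination (((Real.sqrt Real.pi : ℂ) * Complex.exp (-(p:ℂ) ^ 2) * (-1) ^ l *
        2 ^ (l + m + 1) * (l.factorial : ℂ) * ((x:ℂ) + Complex.I * p) ^ m)) *
        lag_rec l m (2 * (x:ℂ) ^ 2 + 2 * (p:ℂ) ^ 2)
      + (-4 * (p:ℂ) ^ 2 * ((Real.sqrt Real.pi : ℂ) * Complex.exp (-(p:ℂ) ^ 2) * (-1) ^ l *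
        2 ^ (l + m) * (l.factorial : ℂ) * ((x:ℂ) + Complex.I * p) ^ m *
        lag l (m + 1) (2 * (x:ℂ) ^ 2 + 2 * (p:ℂ) ^ 2))) * Complex.I_sq

lemma norm_const (k l : ℕ) :
    (Real.sqrt (2 ^ l * (l.factorial : ℝ) * Real.sqrt Real.pi))⁻¹ *
      (Real.sqrt (2 ^ k * (k.factorial : ℝ) * Real.sqrt Real.pi))⁻¹ *
      Real.sqrt Real.pi * (2 ^ k * (l.factorial : ℝ)) =
    Real.sqrt ((2 ^ k * (l.factorial : ℝ)) / (2 ^ l * (k.factorial : ℝ))) := by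
  have ha : (0:ℝ) < 2 ^ l * (l.factorial : ℝ) := by positivity
  have hb : (0:ℝ) < 2 ^ k * (k.factorial : ℝ) := by positivity
  have hc : (0:ℝ) < 2 ^ k * (l.factorial : ℝ) := by positivity
  have hπ : (0:ℝ) < Real.pi := Real.pi_pos
  have hsa : (0:ℝ) < Real.sqrt (2 ^ l * (l.factorial : ℝ)) := Real.sqrt_pos.2 ha
  have hsb : (0:ℝ) < Real.sqrt (2 ^ k * (k.factorial : ℝ)) := Real.sqrt_pos.2 hb
  have hsπ : (0:ℝ) < Real.sqrt Real.pi := Real.sqrt_pos.2 hπ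
  have hssπ : (0:ℝ) < Real.sqrt (Real.sqrt Real.pi) := Real.sqrt_pos.2 hsπ
  rw [Real.sqrt_mul ha.le, Real.sqrt_mul hb.le]
  have hd : (2 ^ k * (l.factorial : ℝ)) / (2 ^ l * (k.factorial : ℝ)) =
      ((2 ^ k * (l.factorial : ℝ)) /
        (Real.sqrt (2 ^ l * (l.factorial : ℝ)) * Real.sqrt (2 ^ k * (k.factorial : ℝ)))) ^ 2 := by
    rw [div_pow, mul_pow (Real.sqrt (2 ^ l * (l.factorial : ℝ)))
        (Real.sqrt (2 ^ k * (k.factorial : ℝ))), Real.sq_sqrt ha.le, Real.sq_sqrt hb.le,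
      show (2 ^ l * (l.factorial : ℝ)) * (2 ^ k * (k.factorial : ℝ)) =
        (2 ^ k * (l.factorial : ℝ)) * (2 ^ l * (k.factorial : ℝ)) from by ring, sq,
      mul_div_mul_left _ _ hc.ne']
  rw [hd, Real.sqrt_sq (by positivity)]
  have h2 : Real.sqrt (Real.sqrt Real.pi) * Real.sqrt (Real.sqrt Real.pi) = Real.sqrt Real.pi :=
    Real.mul_self_sqrt hsπ.le
  have h3 : (Real.sqrt (Real.sqrt Real.pi))⁻¹ * (Real.sqrt (Real.sqrt Real.pi))⁻¹ *
      Real.sqrt Real.pi = 1 := by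
    rw [← mul_inv, h2]
    exact inv_mul_cancel₀ hsπ.ne'
  linear_combination ((2 ^ k * (l.factorial : ℝ)) * (Real.sqrt (2 ^ l * (l.factorial : ℝ)))⁻¹ *
    (Real.sqrt (2 ^ k * (k.factorial : ℝ)))⁻¹) * h3

lemma integrand_eq (k l : ℕ) (x p : ℝ) (s : ℝ) :
    Complex.exp (2 * Complex.I * (p : ℂ) * (s : ℂ)) *
        ((hermFun l (x - s) : ℝ) : ℂ) * ((hermFun k (x + s) : ℝ) : ℂ) =
      (((Real.sqrt (2 ^ l * (l.factorial : ℝ) * Real.sqrt Real.pi))⁻¹ *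
        (Real.sqrt (2 ^ k * (k.factorial : ℝ) * Real.sqrt Real.pi))⁻¹ *
        Real.exp (-x ^ 2) : ℝ) : ℂ) *
        ((Apoly x k l).eval (s : ℂ) * Complex.exp (-(s:ℂ) ^ 2 + 2 * Complex.I * p * s)) := by
  unfold hermFun Apoly
  rw [Polynomial.eval_mul, Polynomial.eval_comp, Polynomial.eval_comp]
  simp only [eval_sub, eval_add, eval_C, eval_X]
  rw [show (x:ℂ) - s = ((x - s : ℝ) : ℂ) from by push_cast; ring,
    show (x:ℂ) + s = ((x + s : ℝ) : ℂ) from by push_cast; ring, Hc_eval, Hc_eval]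
  have hexp : Complex.exp (2 * Complex.I * (p : ℂ) * (s : ℂ)) *
      Complex.exp (((-(x - s) ^ 2 / 2 : ℝ) : ℂ)) * Complex.exp (((-(x + s) ^ 2 / 2 : ℝ) : ℂ)) =
      Complex.exp (((-x ^ 2 : ℝ) : ℂ)) * Complex.exp (-(s:ℂ) ^ 2 + 2 * Complex.I * p * s) := by
    rw [← Complex.exp_add, ← Complex.exp_add, ← Complex.exp_add]
    congr 1
    push_cast
    ring
  push_cast [Complex.ofReal_exp] at hexp ⊢
  linear_combination (((Real.sqrt (2 ^ l * (l.factorial : ℝ) * Real.sqrt Real.pi))⁻¹ : ℂ) *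
    ((Real.sqrt (2 ^ k * (k.factorial : ℝ) * Real.sqrt Real.pi))⁻¹ : ℂ) *
    ((hermiteH l (x - s) : ℝ) : ℂ) * ((hermiteH k (x + s) : ℝ) : ℂ)) * hexp


/-- The Wigner-transform integral of a product of Hermite functions in terms of
Laguerre polynomials. -/
theorem wigner_hermite (k l : ℕ) (hkl : l ≤ k) (x p : ℝ) :
    (1 / (Real.pi : ℂ)) *
      ∫ s : ℝ, Complex.exp (2 * Complex.I * (p : ℂ) * (s : ℂ)) *
        ((hermFun l (x - s) : ℝ) : ℂ) * ((hermFun k (x + s) : ℝ) : ℂ) =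
      ((Real.exp (-x ^ 2 - p ^ 2) / Real.pi : ℝ) : ℂ) * (-1 : ℂ) ^ l *
        ((Real.sqrt ((2 ^ k * (l.factorial : ℝ)) / (2 ^ l * (k.factorial : ℝ))) : ℝ) : ℂ) *
        ((x : ℂ) + Complex.I * (p : ℂ)) ^ (k - l) *
        lag l (k - l) ((2 * x ^ 2 + 2 * p ^ 2 : ℝ) : ℂ) := by
  have hint : (∫ s : ℝ, Complex.exp (2 * Complex.I * (p : ℂ) * (s : ℂ)) *
        ((hermFun l (x - s) : ℝ) : ℂ) * ((hermFun k (x + s) : ℝ) : ℂ)) =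
      (((Real.sqrt (2 ^ l * (l.factorial : ℝ) * Real.sqrt Real.pi))⁻¹ *
        (Real.sqrt (2 ^ k * (k.factorial : ℝ) * Real.sqrt Real.pi))⁻¹ *
        Real.exp (-x ^ 2) : ℝ) : ℂ) * Wint x p k l := by
    rw [show (fun s : ℝ => Complex.exp (2 * Complex.I * (p : ℂ) * (s : ℂ)) *
        ((hermFun l (x - s) : ℝ) : ℂ) * ((hermFun k (x + s) : ℝ) : ℂ)) =
      fun s : ℝ => (((Real.sqrt (2 ^ l * (l.factorial : ℝ) * Real.sqrt Real.pi))⁻¹ *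
        (Real.sqrt (2 ^ k * (k.factorial : ℝ) * Real.sqrt Real.pi))⁻¹ *
        Real.exp (-x ^ 2) : ℝ) : ℂ) *
        ((Apoly x k l).eval (s : ℂ) * Complex.exp (-(s:ℂ) ^ 2 + 2 * Complex.I * p * s))
      from funext (integrand_eq k l x p)]
    rw [integral_const_mul]
    rfl
  rw [hint]
  have hw := W_closed x p l (k - l)
  rw [show l + (k - l) = k from by omega] at hw
  rw [hw]
  have hu : ((2 * x ^ 2 + 2 * p ^ 2 : ℝ) : ℂ) = 2 * (x:ℂ) ^ 2 + 2 * (p:ℂ) ^ 2 := by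
    push_cast; ring
  rw [hu]
  have hR : ((Real.exp (-x ^ 2 - p ^ 2) / Real.pi : ℝ) : ℂ) =
      ((Real.exp (-x ^ 2) : ℝ) : ℂ) * Complex.exp (-(p:ℂ) ^ 2) * ((Real.pi : ℝ) : ℂ)⁻¹ := by
    rw [show (-x ^ 2 - p ^ 2 : ℝ) = (-x ^ 2) + (-p ^ 2) from by ring, Real.exp_add]
    push_cast [Complex.ofReal_exp]
    ring
  rw [hR]
  have hs := norm_const k l
  have hsC : ((Real.sqrt (2 ^ l * (l.factorial : ℝ) * Real.sqrt Real.pi))⁻¹ *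
      (Real.sqrt (2 ^ k * (k.factorial : ℝ) * Real.sqrt Real.pi))⁻¹ *
      Real.sqrt Real.pi * (2 ^ k * (l.factorial : ℝ)) : ℂ) =
      ((Real.sqrt ((2 ^ k * (l.factorial : ℝ)) / (2 ^ l * (k.factorial : ℝ))) : ℝ) : ℂ) := by
    exact_mod_cast congrArg (fun t : ℝ => (t : ℂ)) hs
  push_cast at hsC ⊢
  linear_combination (((Real.pi : ℂ))⁻¹ * Complex.exp (-(x:ℂ) ^ 2) *
    Complex.exp (-(p:ℂ) ^ 2) * (-1 : ℂ) ^ l * ((x : ℂ) + Complex.I * (p : ℂ)) ^ (k - l) *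
    lag l (k - l) (2 * (x:ℂ) ^ 2 + 2 * (p:ℂ) ^ 2)) * hsC
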